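/- For n ≥ 1 and u > 0, the value Q₀(1+u) of the hypergeometric function Q_s(t) = (Γ(s+n)Γ(s+1)/Γ(2s+n+1)) t^{-(s+n)} F(s+n, s+1, 2s+n+1; 1/t) at s = 0, t = 1+u equals log(1+u) − log(u) − Σ_{i=1}^{n−1} 1/(i(1+u)^i). In particular Q₀(1+u) = P₀(u) where P₀(u) = ∫₁^∞ du'/(u'(1+u u')ⁿ). -/

import Mathlib

/-- The Gauss hypergeometric series `F(a,b,c;z) = ∑_{k≥0} (a)_k (b)_k / ((c)_k k!) z^k`. -/
noncomputable def gaussHyper (a b c z : ℂ) : ℂ :=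
  ∑' k : ℕ,
    ((ascPochhammer ℂ k).eval a * (ascPochhammer ℂ k).eval b /
      ((ascPochhammer ℂ k).eval c * (k.factorial : ℂ))) * z ^ k

/-- `Q_s(t) = (Γ(s+n)Γ(s+1)/Γ(2s+n+1)) · t^{-(s+n)} · F(s+n, s+1, 2s+n+1; 1/t)`. -/
noncomputable def Qfun (n : ℕ) (s : ℂ) (t : ℝ) : ℂ :=
  (Complex.Gamma (s + n) * Complex.Gamma (s + 1) / Complex.Gamma (2 * s + n + 1)) *
    (t : ℂ) ^ (-(s + n)) * gaussHyper (s + n) (s + 1) (2 * s + n + 1) (1 / (t : ℂ))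

open Finset Filter MeasureTheory Set

/-- The real series `∑_k z^{k+m+1}/(k+m+1)` with `z = (1+u)⁻¹`. -/
lemma stmt5_series (m : ℕ) (u : ℝ) (hu : 0 < u) :
    HasSum (fun k : ℕ => ((1+u)⁻¹) ^ (k + m + 1) / (k + m + 1))
      (Real.log (1+u) - Real.log u - ∑ i ∈ Finset.Icc 1 m, 1 / ((i:ℝ) * (1+u)^i)) := by
  have hu1 : (0:ℝ) < 1 + u := by linarith
  set z : ℝ := (1+u)⁻¹ with hz
  have hz0 : 0 < z := by positivity
  have hz1 : z < 1 := by
    rw [hz]; rw [inv_lt_one_iff₀]; right; linarith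
  have habs : |z| < 1 := by rw [abs_of_pos hz0]; exact hz1
  have h1 : HasSum (fun k : ℕ => z ^ (k + 1) / (k + 1)) (Real.log (1+u) - Real.log u) := by
    have h := Real.hasSum_pow_div_log_of_abs_lt_one habs
    have h2 : 1 - z = u / (1+u) := by rw [hz]; field_simp; ring
    rwa [h2, Real.log_div hu.ne' hu1.ne', neg_sub] at h
  have hsum : ∑ i ∈ Finset.Icc 1 m, 1 / ((i:ℝ) * (1+u)^i)
      = ∑ i ∈ Finset.range m, z ^ (i + 1) / (i + 1) := by
    rw [← Finset.Ico_add_one_right_eq_Icc, Finset.sum_Ico_eq_sum_range]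
    refine Finset.sum_congr (by simp) fun i _ => ?_
    push_cast
    rw [hz, inv_pow]
    field_simp
    ring
  rw [hsum]
  have := (hasSum_nat_add_iff' (f := fun k : ℕ => z ^ (k + 1) / (k + 1)) m).2 h1
  convert this using 2 with k
  · rfl
  push_cast; ring

/-- Evaluation of the hypergeometric series `F(m+1, 1, m+2; (1+u)⁻¹)`. -/
lemma stmt5_gauss (m : ℕ) (u : ℝ) (hu : 0 < u)
    (T : ℝ)
    (hR : HasSum (fun k : ℕ => ((1+u)⁻¹) ^ (k + m + 1) / (k + m + 1)) T) :
    gaussHyper ((m+1 : ℕ) : ℂ) 1 (((m+1:ℕ) : ℂ) + 1) (1 / ((1+u : ℝ) : ℂ))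
      = ((m+1 : ℕ) : ℂ) * ((1+u:ℝ):ℂ)^(m+1) * (T : ℂ) := by
  have hu1 : (0:ℝ) < 1 + u := by linarith
  have hw0 : ((1+u:ℝ):ℂ) ≠ 0 := by exact_mod_cast hu1.ne'
  have hC : HasSum (fun k : ℕ => ((((1+u)⁻¹) ^ (k + m + 1) / (k + m + 1) : ℝ) : ℂ)) (T : ℂ) :=
    Complex.hasSum_ofReal.mpr hR
  have hC2 := hC.mul_left (((m+1 : ℕ) : ℂ) * ((1+u:ℝ):ℂ)^(m+1))
  unfold gaussHyper
  rw [tsum_congr (g := fun k : ℕ =>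
      (((m+1 : ℕ) : ℂ) * ((1+u:ℝ):ℂ)^(m+1)) *
        ((((1+u)⁻¹) ^ (k + m + 1) / (k + m + 1) : ℝ) : ℂ)) ?_]
  · exact hC2.tsum_eq
  intro k
  have h1 : (ascPochhammer ℂ k).eval ((m+1 : ℕ) : ℂ) = ((m+1).ascFactorial k : ℂ) := by
    rw [← ascPochhammer_eval_cast, ascPochhammer_nat_eq_ascFactorial]
  have h2 : (ascPochhammer ℂ k).eval (1 : ℂ) = (k.factorial : ℂ) :=
    ascPochhammer_eval_one ℂ k
  have h3 : (ascPochhammer ℂ k).eval (((m+1 : ℕ) : ℂ) + 1) = ((m+2).ascFactorial k : ℂ) := by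
    have : ((m+1 : ℕ) : ℂ) + 1 = ((m+2 : ℕ) : ℂ) := by push_cast; ring
    rw [this, ← ascPochhammer_eval_cast, ascPochhammer_nat_eq_ascFactorial]
  rw [h1, h2, h3]
  have hk : (k.factorial : ℂ) ≠ 0 := Nat.cast_ne_zero.2 k.factorial_ne_zero
  have haF : (((m+2).ascFactorial k : ℕ) : ℂ) ≠ 0 :=
    Nat.cast_ne_zero.2 (Nat.ascFactorial_pos (m+1) k).ne'
  have hD : ((k:ℂ) + (m:ℂ) + 1) ≠ 0 := by
    have : ((k+m+1 : ℕ) : ℂ) ≠ 0 := Nat.cast_ne_zero.2 (by omega)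
    push_cast at this; exact this
  have key : ((m+1).ascFactorial k : ℂ) * ((k:ℂ) + (m:ℂ) + 1)
      = ((m+1:ℕ) : ℂ) * ((m+2).ascFactorial k : ℂ) := by
    have h4 := Nat.succ_ascFactorial (m+1) k
    have h5 : (((m+1) * (m+1+1).ascFactorial k : ℕ) : ℂ)
        = ((((m+1)+k) * (m+1).ascFactorial k : ℕ) : ℂ) := by
      exact_mod_cast congrArg (Nat.cast : ℕ → ℂ) h4
    push_cast at h5 ⊢
    linear_combination h5.symm
  have hw0' : (1:ℂ) + (u:ℂ) ≠ 0 := by push_cast at hw0; exact hw0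
  push_cast
  rw [pow_add, pow_add]
  field_simp
  push_cast at key
  have hm : (1+(u:ℂ))^m * (1/(1+(u:ℂ)))^m = 1 := by rw [← mul_pow, mul_one_div_cancel hw0', one_pow]
  linear_combination (1/(1+(u:ℂ)))^k * key - ((m:ℂ)+1) * ((m+2).ascFactorial k : ℂ) * (1/(1+(u:ℂ)))^k * hm

/-- The improper integral evaluation. -/
lemma stmt5_integral (m : ℕ) (u : ℝ) (hu : 0 < u) :
    ∫ x in Set.Ioi (1:ℝ), 1 / (x * (1 + u * x) ^ (m+1))
      = Real.log (1+u) - Real.log u - ∑ i ∈ Finset.Icc 1 m, 1 / ((i:ℝ) * (1+u)^i) := by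
  set g : ℝ → ℝ := fun x =>
    Real.log x - Real.log (1+u*x) + ∑ i ∈ Finset.Icc 1 m, ((i:ℝ)*(1+u*x)^i)⁻¹ with hg
  have hderiv : ∀ x : ℝ, 0 < x → HasDerivAt g (1 / (x * (1 + u * x) ^ (m+1))) x := by
    intro x hx
    have hux : 0 < u * x := mul_pos hu hx
    have hy : 0 < 1 + u * x := by linarith
    have hy1 : 1 < 1 + u * x := by linarith
    have hinner : HasDerivAt (fun x : ℝ => 1 + u * x) u x := by
      simpa using ((hasDerivAt_id x).const_mul u).const_add 1
    have hlog1 : HasDerivAt Real.log x⁻¹ x := Real.hasDerivAt_log hx.ne'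
    have hlog2 : HasDerivAt (fun x : ℝ => Real.log (1+u*x)) ((1+u*x)⁻¹ * u) x :=
      (Real.hasDerivAt_log hy.ne').comp (h₂ := Real.log) x hinner
    have hterm : ∀ i ∈ Finset.Icc 1 m,
        HasDerivAt (fun x : ℝ => ((i:ℝ)*(1+u*x)^i)⁻¹) (-(u * ((1+u*x)^(i+1))⁻¹)) x := by
      intro i hi
      have hi1 := (Finset.mem_Icc.mp hi).1
      obtain ⟨j, rfl⟩ : ∃ j, i = j + 1 := ⟨i - 1, by omega⟩
      have hp : HasDerivAt (fun x : ℝ => ((j+1:ℕ):ℝ)*(1+u*x)^(j+1))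
          (((j+1:ℕ):ℝ) * (((j+1:ℕ):ℝ) * (1+u*x)^j * u)) x := by
        exact ((hinner.pow (j+1)).const_mul _)
      have hne : ((j+1:ℕ):ℝ)*(1+u*x)^(j+1) ≠ 0 := by positivity
      have := hp.inv hne
      refine this.congr_deriv ?_
      have h2 : (1+u*x) ≠ 0 := hy.ne'
      field_simp
      ring
    have hsum := HasDerivAt.fun_sum hterm
    have htot := (hlog1.sub hlog2).add hsum
    refine htot.congr_deriv ?_
    -- algebraic identity
    have hr1 : (1+u*x)⁻¹ ≠ 1 := by
      have h : (1+u*x)⁻¹ < 1 := by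
        rw [inv_lt_one_iff₀]; right; exact hy1
      exact h.ne
    have hgeom := geom_sum_eq hr1 m
    have hsum2 : ∑ i ∈ Finset.Icc 1 m, -(u * ((1+u*x)^(i+1))⁻¹)
        = -u * ((1+u*x)⁻¹)^2 * ((((1+u*x)⁻¹)^m - 1)/((1+u*x)⁻¹ - 1)) := by
      rw [← Finset.Ico_add_one_right_eq_Icc, Finset.sum_Ico_eq_sum_range]
      have : ∀ j ∈ Finset.range m, -(u * ((1+u*x)^((1+j)+1))⁻¹)
          = (-u * ((1+u*x)⁻¹)^2) * ((1+u*x)⁻¹)^j := by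
        intro j _
        rw [← inv_pow]
        ring
      rw [Nat.add_sub_cancel, Finset.sum_congr rfl this, ← Finset.mul_sum, hgeom]
    rw [hsum2]
    have hx0 : x ≠ 0 := hx.ne'
    have hy0 : (1+u*x) ≠ 0 := hy.ne'
    have hym : (1+u*x)^m ≠ 0 := pow_ne_zero _ hy0
    have hr2 : (1+u*x)⁻¹ - 1 ≠ 0 := sub_ne_zero.2 hr1
    simp only [inv_pow]
    field_simp
    ring
  have g'nonneg : ∀ x ∈ Set.Ioi (1:ℝ), 0 ≤ 1 / (x * (1 + u * x) ^ (m+1)) := by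
    intro x hx
    have hx1 : (1:ℝ) < x := hx
    have hx0 : 0 < x := by linarith
    have hy : 0 < 1 + u * x := by nlinarith
    positivity
  have hcont : ContinuousWithinAt g (Set.Ici 1) 1 :=
    (hderiv 1 one_pos).continuousAt.continuousWithinAt
  -- limit at infinity
  have hlim : Tendsto g atTop (nhds (Real.log u⁻¹ + ∑ i ∈ Finset.Icc 1 m, 0)) := by
    apply Tendsto.add
    · -- log x - log (1+u*x) → log u⁻¹
      have h1 : Tendsto (fun x : ℝ => x⁻¹ + u) atTop (nhds (0 + u)) :=
        tendsto_inv_atTop_zero.add tendsto_const_nhds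
      have h2 : Tendsto (fun x : ℝ => (x⁻¹ + u)⁻¹) atTop (nhds u⁻¹) := by
        have := h1.inv₀ (by simpa using hu.ne')
        simpa using this
      have h3 : Tendsto (fun x : ℝ => Real.log ((x⁻¹ + u)⁻¹)) atTop (nhds (Real.log u⁻¹)) :=
        ((Real.continuousAt_log (by positivity : u⁻¹ ≠ 0)).tendsto).comp h2
      apply h3.congr'
      filter_upwards [eventually_gt_atTop (0:ℝ)] with x hx
      have hy : 0 < 1 + u * x := by nlinarith
      have heq : (x⁻¹ + u)⁻¹ = x / (1+u*x) := by
        rw [eq_div_iff hy.ne']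
        field_simp
      rw [heq, Real.log_div hx.ne' hy.ne']
    · apply tendsto_finset_sum
      intro i hi
      have hi1 : 1 ≤ i := (Finset.mem_Icc.mp hi).1
      have h1 : Tendsto (fun x : ℝ => 1 + u * x) atTop atTop := by
        apply tendsto_atTop_add_const_left
        exact (tendsto_id.const_mul_atTop hu)
      have h2 : Tendsto (fun x : ℝ => (1 + u * x)^i) atTop atTop :=
        (tendsto_pow_atTop (by omega)).comp h1
      have h3 : Tendsto (fun x : ℝ => (i:ℝ) * (1 + u * x)^i) atTop atTop :=
        h2.const_mul_atTop (by positivity)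
      exact h3.inv_tendsto_atTop
  have key := integral_Ioi_of_hasDerivAt_of_nonneg hcont
    (fun x hx => hderiv x (lt_trans one_pos hx)) g'nonneg hlim
  rw [key, hg]
  simp only [Real.log_one, mul_one, Finset.sum_const, smul_eq_mul, mul_zero,
    Real.log_inv, one_div]
  ring

/-- For `n ≥ 1` and `u > 0`,
`Q₀(1+u) = log(1+u) − log u − ∑_{i=1}^{n−1} 1/(i(1+u)^i)`, and in particular
`Q₀(1+u) = P₀(u)` where `P₀(u) = ∫₁^∞ du'/(u'(1+u u')ⁿ)`. -/
theorem stmt5 (n : ℕ) (hn : 1 ≤ n) (u : ℝ) (hu : 0 < u) :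
    Qfun n 0 (1 + u)
        = ((Real.log (1 + u) - Real.log u
            - ∑ i ∈ Finset.Icc 1 (n - 1), 1 / ((i : ℝ) * (1 + u) ^ i) : ℝ) : ℂ)
      ∧ Qfun n 0 (1 + u)
        = ((∫ x in Set.Ioi (1 : ℝ), 1 / (x * (1 + u * x) ^ n) : ℝ) : ℂ) := by
  obtain ⟨m, rfl⟩ : ∃ m, n = m + 1 := ⟨n - 1, by omega⟩
  have hu1 : (0:ℝ) < 1 + u := by linarith
  set T : ℝ := Real.log (1+u) - Real.log u
      - ∑ i ∈ Finset.Icc 1 m, 1 / ((i:ℝ) * (1+u)^i) with hT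
  have hQ : Qfun (m+1) 0 (1 + u) = (T : ℂ) := by
    have hser := stmt5_series m u hu
    have hgh := stmt5_gauss m u hu T (by rw [hT]; exact hser)
    unfold Qfun
    simp only [zero_add, mul_zero]
    rw [hgh]
    have hg1 : Complex.Gamma (((m+1:ℕ)):ℂ) = (m.factorial : ℂ) := by
      have : ((m+1 : ℕ) : ℂ) = (m:ℂ) + 1 := by push_cast; ring
      rw [this, Complex.Gamma_nat_eq_factorial]
    have hg2 : Complex.Gamma ((((m+1:ℕ)):ℂ) + 1) = ((m+1).factorial : ℂ) := by
      exact_mod_cast Complex.Gamma_nat_eq_factorial (m+1)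
    rw [hg1, hg2, Complex.Gamma_one, Complex.cpow_neg, Complex.cpow_natCast]
    have hw0 : ((1+u:ℝ):ℂ) ≠ 0 := by exact_mod_cast hu1.ne'
    have hwp : ((1+u:ℝ):ℂ) ^ (m+1) ≠ 0 := pow_ne_zero _ hw0
    have hf1 : ((m.factorial : ℕ) : ℂ) ≠ 0 := Nat.cast_ne_zero.2 m.factorial_ne_zero
    have hf2 : (((m+1).factorial : ℕ) : ℂ) ≠ 0 := Nat.cast_ne_zero.2 (m+1).factorial_ne_zero
    rw [Nat.factorial_succ]
    push_cast
    field_simp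
    have h1 : ((m:ℂ)+1) ≠ 0 := Nat.cast_add_one_ne_zero m
    have hw0' : (1:ℂ)+(u:ℂ) ≠ 0 := by push_cast at hw0; exact hw0
    rw [div_eq_iff (pow_ne_zero (m+1) hw0')]
    ring
  constructor
  · rw [hQ]
    norm_num [hT]
  · rw [hQ, stmt5_integral m u hu, hT]
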